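/- Let p, m ≥ 1, γ ∈ ℕ with γ ≥ 1, y_1, …, y_m ∈ ℝ^p, and g ∈ ℝ^m. Then the function f : ℝ^p → ℝ defined by f(z) = (1 + ‖z‖^2)^γ − 2 Σ_{i=1}^m g_i (1 + ⟨y_i, z⟩)^γ is coercive: f(z) → +∞ as ‖z‖ → ∞ (i.e., f tends to +∞ along the cocompact filter of ℝ^p). -/

import Mathlib

open RealInnerProductSpace Filter

/-- The polynomial-kernel objective `f(z) = (1 + ‖z‖²)^γ − 2 Σᵢ gᵢ (1 + ⟪yᵢ, z⟫)^γ`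
is coercive: it tends to `+∞` along the cocompact filter of `ℝ^p`. -/
theorem stmt5 (p m : ℕ) (hp : 1 ≤ p) (hm : 1 ≤ m) (γ : ℕ) (hγ : 1 ≤ γ)
    (y : Fin m → EuclideanSpace ℝ (Fin p)) (g : Fin m → ℝ) :
    Tendsto (fun z : EuclideanSpace ℝ (Fin p) =>
        (1 + ‖z‖ ^ 2) ^ γ - 2 * ∑ i, g i * (1 + ⟪y i, z⟫) ^ γ)
      (cocompact (EuclideanSpace ℝ (Fin p))) atTop := by
  set K : ℝ := 2 * ∑ i, |g i| * (1 + ‖y i‖) ^ γ with hKdef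
  have hnorm : Tendsto (fun z : EuclideanSpace ℝ (Fin p) => ‖z‖)
      (cocompact (EuclideanSpace ℝ (Fin p))) atTop := tendsto_norm_cocompact_atTop
  have h1 : Tendsto (fun r : ℝ => (1 + r) ^ γ) atTop atTop :=
    (tendsto_pow_atTop (Nat.one_le_iff_ne_zero.mp hγ)).comp
      (tendsto_atTop_add_const_left _ 1 tendsto_id)
  have hL : Tendsto (fun z : EuclideanSpace ℝ (Fin p) =>
      (1 + ‖z‖) ^ γ * ((1 + ‖z‖) ^ γ / 2 ^ γ - K))
      (cocompact (EuclideanSpace ℝ (Fin p))) atTop := by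
    apply Tendsto.atTop_mul_atTop₀ (h1.comp hnorm)
    have h2 : Tendsto (fun r : ℝ => (1 + r) ^ γ / 2 ^ γ - K) atTop atTop :=
      tendsto_atTop_add_const_right _ (-K) (h1.atTop_div_const (by positivity))
    exact h2.comp hnorm
  refine tendsto_atTop_mono (fun z => ?_) hL
  have hz : (0:ℝ) ≤ ‖z‖ := norm_nonneg z
  have hb : ∀ i, g i * (1 + ⟪y i, z⟫) ^ γ ≤ (|g i| * (1 + ‖y i‖) ^ γ) * (1 + ‖z‖) ^ γ := by
    intro i
    have hyi : (0:ℝ) ≤ ‖y i‖ := norm_nonneg _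
    calc g i * (1 + ⟪y i, z⟫) ^ γ ≤ |g i * (1 + ⟪y i, z⟫) ^ γ| := le_abs_self _
      _ = |g i| * |1 + ⟪y i, z⟫| ^ γ := by rw [abs_mul, abs_pow]
      _ ≤ |g i| * ((1 + ‖y i‖) * (1 + ‖z‖)) ^ γ := by
          apply mul_le_mul_of_nonneg_left _ (abs_nonneg _)
          apply pow_le_pow_left₀ (abs_nonneg _) _ γ
          calc |1 + ⟪y i, z⟫| ≤ |(1:ℝ)| + |⟪y i, z⟫| := abs_add_le 1 _
            _ ≤ 1 + ‖y i‖ * ‖z‖ := by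
                have := abs_real_inner_le_norm (y i) z
                simp only [abs_one]; linarith
            _ ≤ (1 + ‖y i‖) * (1 + ‖z‖) := by nlinarith
      _ = (|g i| * (1 + ‖y i‖) ^ γ) * (1 + ‖z‖) ^ γ := by rw [mul_pow]; ring
  have hsum : ∑ i, g i * (1 + ⟪y i, z⟫) ^ γ
      ≤ (∑ i, |g i| * (1 + ‖y i‖) ^ γ) * (1 + ‖z‖) ^ γ := by
    rw [Finset.sum_mul]
    exact Finset.sum_le_sum fun i _ => hb i
  have h2 : ((1 + ‖z‖) ^ γ) ^ 2 ≤ 2 ^ γ * (1 + ‖z‖ ^ 2) ^ γ := by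
    have hsq : (1 + ‖z‖) ^ 2 ≤ 2 * (1 + ‖z‖ ^ 2) := by nlinarith [sq_nonneg (1 - ‖z‖)]
    calc ((1 + ‖z‖) ^ γ) ^ 2 = ((1 + ‖z‖) ^ 2) ^ γ := by
          rw [← pow_mul, ← pow_mul, Nat.mul_comm]
      _ ≤ (2 * (1 + ‖z‖ ^ 2)) ^ γ := pow_le_pow_left₀ (by positivity) hsq γ
      _ = 2 ^ γ * (1 + ‖z‖ ^ 2) ^ γ := mul_pow 2 _ γ
  have h2' : ((1 + ‖z‖) ^ γ) ^ 2 / 2 ^ γ ≤ (1 + ‖z‖ ^ 2) ^ γ := by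
    rw [div_le_iff₀ (by positivity)]
    linarith [h2]
  have expand : (1 + ‖z‖) ^ γ * ((1 + ‖z‖) ^ γ / 2 ^ γ - K)
      = ((1 + ‖z‖) ^ γ) ^ 2 / 2 ^ γ - K * (1 + ‖z‖) ^ γ := by ring
  rw [expand, hKdef]
  have : 2 * ∑ i, g i * (1 + ⟪y i, z⟫) ^ γ
      ≤ (2 * ∑ i, |g i| * (1 + ‖y i‖) ^ γ) * (1 + ‖z‖) ^ γ := by
    rw [mul_assoc]; linarith [hsum]
  linarith [h2']
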